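/- Let C ⊂ ℝⁿ be a closed convex set defined as the intersection over a family F of convex quadratic polynomials f(x) = xᵀA_f x + B_f x + c_f (with A_f positive semidefinite) of the sets {x : f(x) ≤ 0}, and let x₀ ∈ C satisfy f(x₀) = 0 for all f ∈ F. If ∩_{f∈F} ker(A_f) = {0}, then x₀ is an extreme point of C. -/

import Mathlib

/-- Euclidean inner product on `ℝⁿ`. -/
def dotR {m : ℕ} (v w : Fin m → ℝ) : ℝ := ∑ i, v i * w i

open Matrix

lemma dotR_eq {m : ℕ} (v w : Fin m → ℝ) : dotR v w = v ⬝ᵥ w := rfl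

/-- Let `C = ∩_{f ∈ F} {x : f(x) ≤ 0}` for a family `F` of convex quadrics
`f(x) = xᵀ A_f x + B_f x + c_f` with `A_f` positive semidefinite, and let `x₀` satisfy
`f(x₀) = 0` for all `f ∈ F`.  If `∩_{f ∈ F} ker(A_f) = {0}`, then `x₀` is an extreme
point of `C`. -/
theorem extremePoint_of_convex_quadrics {m : ℕ} {ι : Type*}
    (A : ι → Matrix (Fin m) (Fin m) ℝ) (B : ι → Fin m → ℝ) (c : ι → ℝ)
    (hA : ∀ i, (A i).PosSemidef)
    (C : Set (Fin m → ℝ))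
    (hC : C = {x | ∀ i, dotR x ((A i).mulVec x) + dotR (B i) x + c i ≤ 0})
    (x₀ : Fin m → ℝ)
    (hx₀ : ∀ i, dotR x₀ ((A i).mulVec x₀) + dotR (B i) x₀ + c i = 0)
    (hker : ∀ v : Fin m → ℝ, (∀ i, (A i).mulVec v = 0) → v = 0) :
    x₀ ∈ Set.extremePoints ℝ C := by
  have hx₀C : x₀ ∈ C := by rw [hC]; intro i; exact (hx₀ i).le
  refine ⟨hx₀C, fun y hy z hz hseg => ?_⟩
  obtain ⟨a, b, ha, hb, hab, hsum⟩ := hseg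
  have hyz : y = z := by
    apply sub_eq_zero.mp
    apply hker
    intro i
    rw [← (hA i).dotProduct_mulVec_zero_iff]
    have hsym : (A i)ᵀ = A i := (hA i).isHermitian
    have hq : ∀ u v : Fin m → ℝ, u ⬝ᵥ (A i) *ᵥ v = v ⬝ᵥ (A i) *ᵥ u := by
      intro u v
      conv_lhs => rw [← hsym]
      rw [Matrix.mulVec_transpose, dotProduct_comm, ← Matrix.dotProduct_mulVec]
    have hkey : a * b * ((y - z) ⬝ᵥ (A i) *ᵥ (y - z))
        = a * (y ⬝ᵥ (A i) *ᵥ y + (B i) ⬝ᵥ y + c i)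
        + b * (z ⬝ᵥ (A i) *ᵥ z + (B i) ⬝ᵥ z + c i)
        - ((a • y + b • z) ⬝ᵥ (A i) *ᵥ (a • y + b • z) + (B i) ⬝ᵥ (a • y + b • z) + c i) := by
      simp only [Matrix.mulVec_add, Matrix.mulVec_smul, dotProduct_add,
        add_dotProduct, smul_dotProduct, dotProduct_smul,
        Matrix.mulVec_sub, sub_dotProduct, dotProduct_sub,
        smul_eq_mul, hq z y]
      have h1 : b = 1 - a := by linarith
      subst h1; ring
    have hy' := hy; have hz' := hz
    rw [hC] at hy' hz'
    have h1 := hy' i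
    have h2 := hz' i
    rw [dotR_eq, dotR_eq] at h1 h2
    have h0 : (a • y + b • z) ⬝ᵥ (A i) *ᵥ (a • y + b • z) + (B i) ⬝ᵥ (a • y + b • z) + c i = 0 := by
      rw [hsum]; have := hx₀ i; rw [dotR_eq, dotR_eq] at this; exact this
    have hle : a * b * ((y - z) ⬝ᵥ (A i) *ᵥ (y - z)) ≤ 0 := by
      rw [hkey, h0]; nlinarith
    have hge : 0 ≤ (y - z) ⬝ᵥ (A i) *ᵥ (y - z) := by
      simpa using (hA i).dotProduct_mulVec_nonneg (y - z)
    have hz0 : (y - z) ⬝ᵥ (A i) *ᵥ (y - z) = 0 := by nlinarith [mul_pos ha hb]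
    simpa using hz0
  subst hyz
  have : y = x₀ := by
    rw [← hsum, ← add_smul, hab, one_smul]
  exact this
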